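/- Knight's identity: for all real numbers u and v, ρ_τ(u−v) − ρ_τ(u) = −v·ψ_τ(u) + ∫₀^v [𝟙(u ≤ s) − 𝟙(u ≤ 0)] ds, where ρ_τ(a) = a(τ − 𝟙(a ≤ 0)) and ψ_τ(u) = τ − 𝟙(u ≤ 0). -/

import Mathlib

open intervalIntegral

lemma step_mono (u : ℝ) : Monotone (fun s : ℝ => if u ≤ s then (1:ℝ) else 0) := by
  intro a b hab
  by_cases h : u ≤ a
  · simp [h, h.trans hab]
  · simp only [if_neg h]
    split_ifs <;> norm_num

lemma step_integral (u v : ℝ) :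
    (∫ s in (0:ℝ)..v, (if u ≤ s then (1:ℝ) else 0))
      = max (v - u) 0 - max (0 - u) 0 := by
  have h := intervalIntegral.integral_eq_sub_of_hasDeriv_right
    (f := fun s : ℝ => max (s - u) 0) (f' := fun s : ℝ => if u ≤ s then (1:ℝ) else 0)
    (a := (0:ℝ)) (b := v) ?_ ?_ ?_
  · simpa using h
  · exact (continuous_id.sub continuous_const).max continuous_const |>.continuousOn
  · intro x _
    rcases le_or_gt u x with hux | hux
    · have hev : (fun s : ℝ => s - u) =ᶠ[nhdsWithin x (Set.Ioi x)]
          (fun s : ℝ => max (s - u) 0) := by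
        filter_upwards [self_mem_nhdsWithin] with s hs
        have : u ≤ s := hux.trans (le_of_lt hs)
        simp [max_eq_left, sub_nonneg.mpr this]
      have hd : HasDerivWithinAt (fun s : ℝ => s - u) 1 (Set.Ioi x) x :=
        ((hasDerivAt_id x).sub_const u).hasDerivWithinAt
      have := hd.congr_of_eventuallyEq hev.symm (by simp [max_eq_left, sub_nonneg.mpr hux])
      simpa [if_pos hux] using this
    · have hev : (fun _ : ℝ => (0:ℝ)) =ᶠ[nhdsWithin x (Set.Ioi x)]
          (fun s : ℝ => max (s - u) 0) := by
        have hm : Set.Iio u ∈ nhdsWithin x (Set.Ioi x) :=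
          nhdsWithin_le_nhds (Iio_mem_nhds hux)
        filter_upwards [hm] with s hs
        have : s ≤ u := le_of_lt (Set.mem_Iio.mp hs)
        simp [max_eq_right, sub_nonpos.mpr this]
      have hd : HasDerivWithinAt (fun _ : ℝ => (0:ℝ)) 0 (Set.Ioi x) x :=
        (hasDerivAt_const x 0).hasDerivWithinAt
      have := hd.congr_of_eventuallyEq hev.symm
        (by simp [max_eq_right, sub_nonpos.mpr (le_of_lt hux)])
      simpa [if_neg (not_le.mpr hux)] using this
  · exact (step_mono u).intervalIntegrable

/-- Knight's identity: ρ_τ(u−v) − ρ_τ(u) = −v·ψ_τ(u) + ∫₀^v [𝟙(u ≤ s) − 𝟙(u ≤ 0)] ds. -/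
theorem knight_identity (τ : ℝ) (hτ : τ ∈ Set.Ioo (0:ℝ) 1) (u v : ℝ) :
    (u - v) * (τ - (if u - v ≤ 0 then (1:ℝ) else 0)) - u * (τ - (if u ≤ 0 then (1:ℝ) else 0))
      = -v * (τ - (if u ≤ 0 then (1:ℝ) else 0))
        + ∫ s in (0:ℝ)..v, ((if u ≤ s then (1:ℝ) else 0) - (if u ≤ 0 then (1:ℝ) else 0)) := by
  have hint : IntervalIntegrable (fun s : ℝ => if u ≤ s then (1:ℝ) else 0)
      MeasureTheory.volume 0 v := (step_mono u).intervalIntegrable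
  rw [intervalIntegral.integral_sub hint (intervalIntegrable_const),
    intervalIntegral.integral_const, step_integral]
  simp only [smul_eq_mul, sub_zero]
  have hm1 : max (v - u) 0 = if u ≤ v then v - u else 0 := by
    rcases le_or_gt u v with h | h
    · rw [max_eq_left (by linarith), if_pos h]
    · rw [max_eq_right (by linarith), if_neg (not_le.mpr h)]
  have hm2 : max (0 - u) 0 = if u ≤ 0 then -u else 0 := by
    rcases le_or_gt u 0 with h | h
    · rw [max_eq_left (by linarith), if_pos h]; ring
    · rw [max_eq_right (by linarith), if_neg (not_le.mpr h)]
  rw [hm1, hm2]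
  clear hm1 hm2 hint
  split_ifs with h1 h2 h3 h2 h3 h3 <;> first | ring1 | linarith
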